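/- For every n ≥ 1 there exists an orientation of 𝒢_n that is oddly acyclic, positively swapped, and such that for every two-element subset A = {a,b} of [n] with a < b, the edge between A and {b} is directed from A to {b} = {max(A)}. -/
import Mathlib


/-- An orientation of `𝒢_n`: `o A b = true` means the edge between `A` and
`insert b A` is directed from `A` to `insert b A` (only relevant when `b ∉ A`). -/
def GraphOrientation (n : ℕ) : Type := Finset (Fin (n + 1)) → Fin (n + 1) → Bool

/-- The diamond `𝒟(C,a,b)` with directions induced by `o` is acyclic with a directed
path of length 3 (equivalently, an odd number of its four edges point upwards). -/
def OddlyAcyclicDiamond {n : ℕ} (o : GraphOrientation n) (C : Finset (Fin (n + 1)))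
    (a b : Fin (n + 1)) : Prop :=
  xor (o C a) (xor (o C b) (xor (o (insert a C) b) (o (insert b C) a))) = true

def OddlyAcyclic {n : ℕ} (o : GraphOrientation n) : Prop :=
  ∀ (C : Finset (Fin (n + 1))) (a b : Fin (n + 1)),
    a ∉ C → b ∉ C → a ≠ b → OddlyAcyclicDiamond o C a b

/-- `o` is positively swapped: for `a < b` in `[n]`, the induced directed subgraph on
the vertices `{a,b}`, `{a}`, `{b}` is a directed path of length 2 (i.e. its two edges
point in "consistent" directions through `{a,b}`) iff `0 < a`. -/
def PositivelySwapped {n : ℕ} (o : GraphOrientation n) : Prop :=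
  ∀ a b : Fin (n + 1), a < b → ((o {a} b ≠ o {b} a) ↔ 0 < a)


/-- auxiliary correction term -/
def hh {n : ℕ} (C : Finset (Fin (n + 1))) : ℕ :=
  if C.card = 2 ∧ (0 : Fin (n + 1)) ∈ C then 1 else 0

def myO (n : ℕ) : GraphOrientation n := fun C a =>
  decide (((C.filter (fun c => a < c)).card + (if a = 0 then 0 else 1)
    + hh C + hh (insert a C)) % 2 = 1)

lemma xor_decide (x y : ℕ) :
    xor (decide (x % 2 = 1)) (decide (y % 2 = 1)) = decide ((x + y) % 2 = 1) := by
  rcases Nat.mod_two_eq_zero_or_one x with hx | hx <;>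
  rcases Nat.mod_two_eq_zero_or_one y with hy | hy <;>
    simp [hx, hy, Nat.add_mod]

lemma card_filter_insert {n : ℕ} (C : Finset (Fin (n + 1))) (a b : Fin (n + 1))
    (ha : a ∉ C) :
    ((insert a C).filter (fun c => b < c)).card
      = (C.filter (fun c => b < c)).card + (if b < a then 1 else 0) := by
  rw [Finset.filter_insert]
  split_ifs with h
  · rw [Finset.card_insert_of_notMem (fun hm => ha (Finset.mem_of_mem_filter _ hm))]
  · simp

lemma myO_oddly (n : ℕ) : OddlyAcyclic (myO n) := by
  intro C a b ha hb hab
  unfold OddlyAcyclicDiamond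
  simp only [myO, xor_decide, decide_eq_true_eq]
  rw [card_filter_insert C a b ha, card_filter_insert C b a hb,
    Finset.insert_comm a b C]
  rcases lt_or_gt_of_ne hab with h | h
  · rw [if_neg (asymm h), if_pos h]; omega
  · rw [if_pos h, if_neg (asymm h)]; omega

lemma myO_pair {n : ℕ} (a b : Fin (n + 1)) (hab : a < b) : myO n {b} a = false := by
  have hb0 : b ≠ 0 := by
    intro h; rw [h] at hab; exact absurd hab (by simp [Fin.le_zero_iff])
  have hne : a ≠ b := hab.ne
  simp only [myO, hh, Finset.filter_singleton, if_pos hab]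
  rw [Finset.card_singleton]
  have h2 : (insert a {b} : Finset (Fin (n + 1))).card = 2 := by
    rw [Finset.card_insert_of_notMem (by simp [hne])]; rfl
  have hmem : (0 : Fin (n + 1)) ∈ (insert a {b} : Finset (Fin (n + 1))) ↔ a = 0 := by
    simp only [Finset.mem_insert, Finset.mem_singleton]
    constructor
    · rintro (h | h) <;> [exact h.symm; exact absurd h.symm hb0]
    · intro h; exact Or.inl h.symm
  by_cases h0 : a = 0
  · subst h0; simp [h2, hmem]
  · simp [h0, h2, hmem]

lemma myO_swap {n : ℕ} (a b : Fin (n + 1)) (hab : a < b) :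
    myO n {a} b = decide (a ≠ 0) := by
  have hb0 : b ≠ 0 := by
    intro h; rw [h] at hab; exact absurd hab (by simp [Fin.le_zero_iff])
  have hne : b ≠ a := hab.ne'
  simp only [myO, hh, Finset.filter_singleton, if_neg (asymm hab)]
  rw [Finset.card_singleton, Finset.card_empty]
  have h2 : (insert b {a} : Finset (Fin (n + 1))).card = 2 := by
    rw [Finset.card_insert_of_notMem (by simp [hne])]; rfl
  have hmem : (0 : Fin (n + 1)) ∈ (insert b {a} : Finset (Fin (n + 1))) ↔ a = 0 := by
    simp only [Finset.mem_insert, Finset.mem_singleton]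
    constructor
    · rintro (h | h) <;> [exact absurd h.symm hb0; exact h.symm]
    · intro h; exact Or.inr h.symm
  by_cases h0 : a = 0
  · subst h0; simp [h2, hmem, hb0]
  · simp [h0, h2, hmem, hb0]

/-- for every `n ≥ 1` there is an oddly acyclic, positively swapped
orientation of `𝒢_n` such that for every 2-element subset `A = {a,b}` (`a < b`),
the edge between `A` and `{b} = {max A}` is directed from `A` to `{b}`. -/
theorem exists_good_orientation (n : ℕ) (hn : 1 ≤ n) :
    ∃ o : GraphOrientation n, OddlyAcyclic o ∧ PositivelySwapped o ∧
      ∀ a b : Fin (n + 1), a < b → o {b} a = false := by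
  refine ⟨myO n, myO_oddly n, ?_, fun a b hab => myO_pair a b hab⟩
  intro a b hab
  rw [myO_pair a b hab, myO_swap a b hab]
  constructor
  · intro h
    by_contra h0
    simp [Fin.not_lt, Fin.le_zero_iff] at h0
    simp [h0] at h
  · intro h
    have : a ≠ 0 := Fin.pos_iff_ne_zero.mp h
    simp [this]
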